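/- The fixed points of the zero-sum replicator map R_H on the two-dimensional simplex are exactly the three vertices e_1 = (1,0,0), e_2 = (0,1,0), e_3 = (0,0,1) and the center c = (1/3,1/3,1/3): R_H(x) = x for x ∈ S² if and only if x ∈ {e_1, e_2, e_3, c}. In particular, the only fixed points on the boundary {x ∈ S² : x_1 x_2 x_3 = 0} are the vertices, and the only interior fixed point is c. -/

import Mathlib

open Filter Topology

/-- The two-dimensional standard simplex `S²` in `ℝ³`. -/
def simplex2 : Set (Fin 3 → ℝ) :=
  {x | (∀ k, 0 ≤ x k) ∧ x 0 + x 1 + x 2 = 1}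

/-- The part `B³_+` of the unit `l_1`-ball lying in the positive orthant of `ℝ³`. -/
def ball3 : Set (Fin 3 → ℝ) :=
  {x | (∀ k, 0 ≤ x k) ∧ x 0 + x 1 + x 2 ≤ 1}
/-- the fixed points of the zero-sum replicator map `R_H` on `S²`
are exactly the three vertices and the center `c = (1/3,1/3,1/3)`; in particular the
only boundary fixed points are the vertices and the only interior fixed point is `c`. -/
theorem stmt_14
    (F R : (Fin 3 → ℝ) → (Fin 3 → ℝ))
    (hFdiff : ContDiffOn ℝ 1 F ball3)
    (hFsop : ∀ x ∈ ball3, ∀ i j, F x j ≤ F x i ↔ x j ≤ x i)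
    (hFpos : ∀ x ∈ ball3, ∀ k, 0 < F x k ∧ F x k ≤ 1)
    (hR0 : ∀ x, R x 0 = x 0 * (1 + x 1 * F x 0 - x 2 * F x 2))
    (hR1 : ∀ x, R x 1 = x 1 * (1 + x 2 * F x 1 - x 0 * F x 0))
    (hR2 : ∀ x, R x 2 = x 2 * (1 + x 0 * F x 2 - x 1 * F x 1)) :
    (∀ x ∈ simplex2,
      (R x = x ↔ x = ![1, 0, 0] ∨ x = ![0, 1, 0] ∨ x = ![0, 0, 1] ∨
        x = ![1/3, 1/3, 1/3])) ∧
    (∀ x ∈ simplex2, x 0 * x 1 * x 2 = 0 →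
      (R x = x ↔ x = ![1, 0, 0] ∨ x = ![0, 1, 0] ∨ x = ![0, 0, 1])) ∧
    (∀ x ∈ simplex2, (∀ k, 0 < x k) →
      (R x = x ↔ x = ![1/3, 1/3, 1/3])) := by
  -- backward: each candidate point is fixed
  have hv1 : R ![1, 0, 0] = ![1, 0, 0] := by
    funext k; fin_cases k <;>
      simp [hR0, hR1, hR2]
  have hv2 : R ![0, 1, 0] = ![0, 1, 0] := by
    funext k; fin_cases k <;>
      simp [hR0, hR1, hR2]
  have hv3 : R ![0, 0, 1] = ![0, 0, 1] := by
    funext k; fin_cases k <;>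
      simp [hR0, hR1, hR2]
  have hcball : (![1/3, 1/3, 1/3] : Fin 3 → ℝ) ∈ ball3 := by
    constructor
    · intro k; fin_cases k <;> norm_num
    · norm_num [Matrix.cons_val_two]
  have hc01 : F ![1/3, 1/3, 1/3] 0 = F ![1/3, 1/3, 1/3] 1 :=
    le_antisymm ((hFsop _ hcball 1 0).mpr (by norm_num))
      ((hFsop _ hcball 0 1).mpr (by norm_num))
  have hc02 : F ![1/3, 1/3, 1/3] 0 = F ![1/3, 1/3, 1/3] 2 :=
    le_antisymm ((hFsop _ hcball 2 0).mpr (by norm_num [Matrix.cons_val_two]))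
      ((hFsop _ hcball 0 2).mpr (by norm_num [Matrix.cons_val_two]))
  have hvc : R ![1/3, 1/3, 1/3] = ![1/3, 1/3, 1/3] := by
    have hc01' := hc01; have hc02' := hc02
    norm_num at hc01' hc02'
    funext k; fin_cases k
    · show R _ 0 = _
      rw [hR0]; norm_num [Matrix.cons_val_two]; linarith
    · show R _ 1 = _
      rw [hR1]; norm_num [Matrix.cons_val_two]; linarith
    · show R _ 2 = _
      rw [hR2]; norm_num [Matrix.cons_val_two]; linarith
  -- forward: classification of fixed points
  have key : ∀ x ∈ simplex2, R x = x →
      x = ![1, 0, 0] ∨ x = ![0, 1, 0] ∨ x = ![0, 0, 1] ∨ x = ![1/3, 1/3, 1/3] := by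
    intro x hx hfix
    have hxb : x ∈ ball3 := ⟨hx.1, le_of_eq hx.2⟩
    have hsum : x 0 + x 1 + x 2 = 1 := hx.2
    have ha : 0 < F x 0 := (hFpos x hxb 0).1
    have hb : 0 < F x 1 := (hFpos x hxb 1).1
    have hc : 0 < F x 2 := (hFpos x hxb 2).1
    have E0 : x 0 * (x 1 * F x 0 - x 2 * F x 2) = 0 := by
      have h := congrFun hfix 0; rw [hR0] at h; linear_combination h
    have E1 : x 1 * (x 2 * F x 1 - x 0 * F x 0) = 0 := by
      have h := congrFun hfix 1; rw [hR1] at h; linear_combination h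
    have E2 : x 2 * (x 0 * F x 2 - x 1 * F x 1) = 0 := by
      have h := congrFun hfix 2; rw [hR2] at h; linear_combination h
    rcases eq_or_lt_of_le (hx.1 0) with h0 | h0
    · -- x 0 = 0
      have h0 : x 0 = 0 := h0.symm
      have h12 : x 1 * x 2 = 0 := by
        have hE : x 1 * x 2 * F x 1 = 0 := by
          have := E1; rw [h0] at this; linear_combination this
        rcases mul_eq_zero.mp hE with h | h
        · exact h
        · exact absurd h (ne_of_gt hb)
      rcases mul_eq_zero.mp h12 with h | h
      · right; right; left
        funext k; fin_cases k <;> simp [h0, h] <;> linarith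
      · right; left
        funext k; fin_cases k <;> simp [h0, h] <;> linarith
    rcases eq_or_lt_of_le (hx.1 1) with h1 | h1
    · -- x 1 = 0
      have h1 : x 1 = 0 := h1.symm
      have h20 : x 2 * x 0 = 0 := by
        have hE : x 2 * x 0 * F x 2 = 0 := by
          have := E2; rw [h1] at this; linear_combination this
        rcases mul_eq_zero.mp hE with h | h
        · exact h
        · exact absurd h (ne_of_gt hc)
      rcases mul_eq_zero.mp h20 with h | h
      · left
        funext k; fin_cases k <;> simp [h1, h] <;> linarith
      · right; right; left
        funext k; fin_cases k <;> simp [h1, h] <;> linarith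
    rcases eq_or_lt_of_le (hx.1 2) with h2 | h2
    · -- x 2 = 0
      have h2 : x 2 = 0 := h2.symm
      have h01 : x 0 * x 1 = 0 := by
        have hE : x 0 * x 1 * F x 0 = 0 := by
          have := E0; rw [h2] at this; linear_combination this
        rcases mul_eq_zero.mp hE with h | h
        · exact h
        · exact absurd h (ne_of_gt ha)
      rcases mul_eq_zero.mp h01 with h | h
      · right; left
        funext k; fin_cases k <;> simp [h2, h] <;> linarith
      · left
        funext k; fin_cases k <;> simp [h2, h] <;> linarith
    · -- all positive: interior case
      have hlt : ∀ i j : Fin 3, x j < x i ↔ F x j < F x i := fun i j =>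
        (lt_iff_lt_of_le_iff_le (hFsop x hxb j i).symm)
      have E0' : x 1 * F x 0 = x 2 * F x 2 := by
        rcases mul_eq_zero.mp E0 with h | h
        · exact absurd h (ne_of_gt h0)
        · linarith [sub_eq_zero.mp h]
      have E1' : x 2 * F x 1 = x 0 * F x 0 := by
        rcases mul_eq_zero.mp E1 with h | h
        · exact absurd h (ne_of_gt h1)
        · linarith [sub_eq_zero.mp h]
      have E2' : x 0 * F x 2 = x 1 * F x 1 := by
        rcases mul_eq_zero.mp E2 with h | h
        · exact absurd h (ne_of_gt h2)
        · linarith [sub_eq_zero.mp h]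
      have h01 : x 0 = x 1 := by
        rcases lt_trichotomy (x 0) (x 1) with h | h | h
        · exfalso
          have hab : F x 0 < F x 1 := (hlt 1 0).mp h
          have h21 : x 2 < x 1 := by
            have hh : x 2 * F x 1 < x 1 * F x 1 := by nlinarith
            exact lt_of_mul_lt_mul_right hh hb.le
          have hcb : F x 2 < F x 1 := (hlt 1 2).mp h21
          have h20 : x 2 < x 0 := by
            have hh : x 2 * F x 2 < x 0 * F x 2 := by nlinarith
            exact lt_of_mul_lt_mul_right hh hc.le
          have hca : F x 2 < F x 0 := (hlt 0 2).mp h20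
          nlinarith
        · exact h
        · exfalso
          have hba : F x 1 < F x 0 := (hlt 0 1).mp h
          have h12 : x 1 < x 2 := by
            have hh : x 1 * F x 1 < x 2 * F x 1 := by nlinarith
            exact lt_of_mul_lt_mul_right hh hb.le
          have hbc : F x 1 < F x 2 := (hlt 2 1).mp h12
          have h02 : x 0 < x 2 := by
            have hh : x 0 * F x 2 < x 2 * F x 2 := by nlinarith
            exact lt_of_mul_lt_mul_right hh hc.le
          have hac : F x 0 < F x 2 := (hlt 2 0).mp h02
          nlinarith
      have hab : F x 0 = F x 1 :=
        le_antisymm ((hFsop x hxb 1 0).mpr h01.le) ((hFsop x hxb 0 1).mpr h01.ge)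
      have h02 : x 0 = x 2 := by
        have h' := E1'
        rw [hab] at h'
        exact (mul_right_cancel₀ (ne_of_gt hb) h').symm
      right; right; right
      have hx0 : x 0 = 1/3 := by linarith
      funext k; fin_cases k <;> simp <;> linarith
  refine ⟨fun x hx => ⟨fun h => key x hx h, ?_⟩, fun x hx hprod => ⟨fun h => ?_, ?_⟩,
    fun x hx hpos => ⟨fun h => ?_, ?_⟩⟩
  · rintro (rfl | rfl | rfl | rfl)
    exacts [hv1, hv2, hv3, hvc]
  · rcases key x hx h with h' | h' | h' | h'
    · exact Or.inl h'
    · exact Or.inr (Or.inl h')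
    · exact Or.inr (Or.inr h')
    · exfalso; subst h'; norm_num [Matrix.cons_val_two] at hprod
  · rintro (rfl | rfl | rfl)
    exacts [hv1, hv2, hv3]
  · rcases key x hx h with h' | h' | h' | h'
    · exfalso; subst h'; have := hpos 1; norm_num at this
    · exfalso; subst h'; have := hpos 0; norm_num at this
    · exfalso; subst h'; have := hpos 0; norm_num at this
    · exact h'
  · rintro rfl; exact hvc
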